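/- For any composition s of n, T(s) = T(s^rev), where s^rev is the reversed sequence. -/

import Mathlib

/-- A noncommutative crossing partition of `[n] = {1,...,n}`: a sequence of blocks such that
every integer in `[n]` appears exactly once, each block is nonempty and strictly increasing,
and `max(π_i) > min(π_{i+1})` for consecutive blocks. -/
def IsNCCP (n : ℕ) (π : List (List ℕ)) : Prop :=
  π.flatten.Perm (List.range' 1 n) ∧
  (∀ b ∈ π, b ≠ [] ∧ b.Pairwise (· < ·)) ∧
  π.Chain' (fun b b' => ∃ x ∈ b, ∃ y ∈ b', y < x)

/-- `Tnum s` is the number of noncommutative crossing partitions of type `s`,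
i.e. whose sequence of block sizes is `s`. -/
noncomputable def Tnum (s : List ℕ) : ℕ :=
  {π : List (List ℕ) | IsNCCP s.sum π ∧ π.map List.length = s}.ncard

/-- The complement-and-reverse map. -/
def Phi (n : ℕ) (π : List (List ℕ)) : List (List ℕ) :=
  (π.map (fun b => (b.map (fun x => n + 1 - x)).reverse)).reverse

lemma mem_range'_iff {n x : ℕ} : x ∈ List.range' 1 n ↔ 1 ≤ x ∧ x ≤ n := by
  rw [List.mem_range'_1]; omega

lemma Phi_bound {n : ℕ} {π : List (List ℕ)} (h : π.flatten.Perm (List.range' 1 n)) :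
    ∀ b ∈ π, ∀ x ∈ b, 1 ≤ x ∧ x ≤ n := by
  intro b hb x hx
  exact mem_range'_iff.1 (h.mem_iff.1 (List.mem_flatten.2 ⟨b, hb, hx⟩))

lemma map_c_perm (n : ℕ) :
    ((List.range' 1 n).map (fun x => n + 1 - x)).Perm (List.range' 1 n) := by
  have hnd : (List.range' 1 n).Nodup := List.nodup_range'
  have hnd2 : ((List.range' 1 n).map (fun x => n + 1 - x)).Nodup := by
    refine List.Nodup.map_on ?_ hnd
    intro x hx y hy hxy
    have := mem_range'_iff.1 hx
    have := mem_range'_iff.1 hy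
    omega
  rw [List.perm_ext_iff_of_nodup hnd2 hnd]
  intro a
  simp only [List.mem_map, mem_range'_iff]
  constructor
  · rintro ⟨x, ⟨h1, h2⟩, rfl⟩; omega
  · rintro ⟨h1, h2⟩; exact ⟨n + 1 - a, ⟨by omega, by omega⟩, by omega⟩

lemma flatten_map_rev_perm (c : ℕ → ℕ) (π : List (List ℕ)) :
    ((π.map (fun b => (b.map (fun x => n + 1 - x)).reverse)).flatten).Perm (π.flatten.map (fun x => n + 1 - x)) := by
  induction π with
  | nil => simp
  | cons b π ih =>
    simp only [List.map_cons, List.flatten_cons, List.map_append]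
    exact ((b.map (fun x => n + 1 - x)).reverse_perm).append ih

lemma Phi_map_length (n : ℕ) (π : List (List ℕ)) :
    (Phi n π).map List.length = (π.map List.length).reverse := by
  unfold Phi
  rw [← List.map_reverse, List.map_map, ← List.map_reverse]
  congr 1
  funext b
  simp

lemma Phi_isNCCP {n : ℕ} {π : List (List ℕ)} (h : IsNCCP n π) : IsNCCP n (Phi n π) := by
  obtain ⟨hperm, hblocks, hchain⟩ := h
  have hbd := Phi_bound hperm
  have hc : True := trivial
  refine ⟨?_, ?_, ?_⟩
  · -- flatten perm
    have h1 : (Phi n π).flatten.Perm ((π.map (fun b => (b.map (fun x => n + 1 - x)).reverse)).flatten) := by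
      unfold Phi
      exact ((π.map (fun b => (b.map (fun x => n + 1 - x)).reverse)).reverse_perm).flatten
    refine h1.trans ((flatten_map_rev_perm (fun x => n + 1 - x) π).trans ?_)
    exact (hperm.map (fun x => n + 1 - x)).trans (map_c_perm n)
  · -- blocks
    intro b hb
    unfold Phi at hb
    rw [List.mem_reverse, List.mem_map] at hb
    obtain ⟨b0, hb0, rfl⟩ := hb
    obtain ⟨hne, hsort⟩ := hblocks b0 hb0
    constructor
    · simp only [ne_eq, List.reverse_eq_nil_iff, List.map_eq_nil_iff]
      exact hne
    · rw [List.pairwise_reverse, List.pairwise_map]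
      refine hsort.imp_of_mem ?_
      intro x y hx hy hxy
      have h1 := hbd b0 hb0 x hx
      have h2 := hbd b0 hb0 y hy
      show n + 1 - y < n + 1 - x
      omega
  · -- chain
    unfold Phi
    unfold List.Chain' at hchain ⊢
    rw [List.isChain_reverse, List.isChain_map, List.isChain_iff_getElem]
    rw [List.isChain_iff_getElem] at hchain
    intro i hi
    obtain ⟨x, hx, y, hy, hyx⟩ := hchain i hi
    have h1 := hbd _ (List.getElem_mem _) x hx
    have h2 := hbd _ (List.getElem_mem _) y hy
    refine ⟨n + 1 - y, ?_, n + 1 - x, ?_, by omega⟩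
    · rw [List.mem_reverse, List.mem_map]; exact ⟨y, hy, rfl⟩
    · rw [List.mem_reverse, List.mem_map]; exact ⟨x, hx, rfl⟩

lemma Phi_Phi {n : ℕ} {π : List (List ℕ)}
    (hbd : ∀ b ∈ π, ∀ x ∈ b, 1 ≤ x ∧ x ≤ n) : Phi n (Phi n π) = π := by
  unfold Phi
  rw [← List.map_reverse, List.reverse_reverse, List.map_map]
  conv_rhs => rw [← List.map_id π]
  apply List.map_congr_left
  intro b hb
  simp only [Function.comp, List.map_reverse, List.reverse_reverse, List.map_map, id]
  conv_rhs => rw [← List.map_id b]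
  apply List.map_congr_left
  intro x hx
  have := hbd b hb x hx
  simp only [Function.comp, id]
  omega

/-- `T(s) = T(s^rev)` for any composition `s` (sequence of positive integers). -/
theorem Tnum_reverse (s : List ℕ) (hpos : ∀ x ∈ s, 0 < x) :
    Tnum s.reverse = Tnum s := by
  unfold Tnum
  rw [List.sum_reverse]
  set n := s.sum with hn
  set A : Set (List (List ℕ)) := {π | IsNCCP n π ∧ π.map List.length = s.reverse} with hA
  set B : Set (List (List ℕ)) := {π | IsNCCP n π ∧ π.map List.length = s} with hB
  have himg : B = Phi n '' A := by
    ext π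
    constructor
    · rintro ⟨h1, h2⟩
      refine ⟨Phi n π, ⟨Phi_isNCCP h1, ?_⟩, Phi_Phi (Phi_bound h1.1)⟩
      rw [Phi_map_length, h2]
    · rintro ⟨π0, ⟨h1, h2⟩, rfl⟩
      refine ⟨Phi_isNCCP h1, ?_⟩
      rw [Phi_map_length, h2, List.reverse_reverse]
  have hinj : Set.InjOn (Phi n) A := by
    intro x hx y hy hxy
    have hx' := Phi_Phi (Phi_bound hx.1.1)
    have hy' := Phi_Phi (Phi_bound hy.1.1)
    rw [← hx', ← hy', hxy]
  rw [himg, Set.ncard_image_of_injOn hinj]
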